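/- arXiv:2009.08417 — 2 statements merged into one kernel-verified Lean document; each statement's English description precedes it below -/
import Mathlib

section
/- Let G, m₁, m₂, r be real numbers with G > 0, m₁ > 0, m₂ > 0, r > 0, let α, β, μ, ω be real with μ ≥ 0, and set m = m₁ + m₂. Define trajectories γ₁, γ₂ : ℝ → EuclideanSpace ℝ (Fin 3) by γ₁(t) = (m₂/m)·r·n(t) and γ₂(t) = −(m₁/m)·r·n(t), where n(t) = (cos ωt, sin ωt, 0). Then γ₁, γ₂ satisfy the Yukawa-corrected two-body equations of motion γ̈ᵢ(t) = −G·mⱼ·(α + β·(1 + μ·d(t))·exp(−μ·d(t)))·(γᵢ(t) − γⱼ(t))/d(t)³, where d(t) = ‖γᵢ(t) − γⱼ(t)‖ (for {i,j} = {1,2}, all t ∈ ℝ), if and only if ω² = (G·m/r³)·(α + β·(1 + μr)·exp(−μr)). This is the angular frequency of circular orbits in linearized area metric gravity, whose static potential is a Coulomb term α/d plus a Yukawa term β·e^{−μd}/d. -/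
/-- The radial unit vector `n(t) = (cos ωt, sin ωt, 0)` of a circular orbit. -/
noncomputable def nvec (ω t : ℝ) : EuclideanSpace ℝ (Fin 3) :=
  (WithLp.equiv 2 (Fin 3 → ℝ)).symm ![Real.cos (ω * t), Real.sin (ω * t), 0]

noncomputable def nvec' (ω t : ℝ) : EuclideanSpace ℝ (Fin 3) :=
  (WithLp.equiv 2 (Fin 3 → ℝ)).symm ![-(ω * Real.sin (ω * t)), ω * Real.cos (ω * t), 0]

lemma norm_nvec (ω t : ℝ) : ‖nvec ω t‖ = 1 := by
  rw [EuclideanSpace.norm_eq]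
  have : ∑ i, ‖(WithLp.equiv 2 (Fin 3 → ℝ)).symm ![Real.cos (ω * t), Real.sin (ω * t), 0] i‖ ^ 2
      = 1 := by
    simp [Fin.sum_univ_three, sq_abs]
  rw [nvec, this, Real.sqrt_one]

lemma nvec_ne_zero (ω t : ℝ) : nvec ω t ≠ 0 := by
  intro h
  have := norm_nvec ω t
  rw [h, norm_zero] at this
  norm_num at this

lemma hasDerivAt_nvec (ω t : ℝ) : HasDerivAt (nvec ω) (nvec' ω t) t := by
  have e := (PiLp.continuousLinearEquiv 2 ℝ (fun _ : Fin 3 => ℝ)).symm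
  have h : HasDerivAt (fun t => (![Real.cos (ω * t), Real.sin (ω * t), 0] : Fin 3 → ℝ))
      (![-(ω * Real.sin (ω * t)), ω * Real.cos (ω * t), 0]) t := by
    rw [hasDerivAt_pi]
    intro i
    fin_cases i <;> simp
    · simpa [mul_comm, Function.comp_def] using ((Real.hasDerivAt_cos (ω * t)).comp t
        ((hasDerivAt_id t).const_mul ω))
    · simpa [mul_comm, Function.comp_def] using ((Real.hasDerivAt_sin (ω * t)).comp t
        ((hasDerivAt_id t).const_mul ω))
    · exact hasDerivAt_const t 0
  exact ((PiLp.continuousLinearEquiv 2 ℝ (fun _ : Fin 3 => ℝ)).symm.hasFDerivAt.comp_hasDerivAt t h)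

lemma hasDerivAt_nvec' (ω t : ℝ) :
    HasDerivAt (nvec' ω) ((-(ω ^ 2)) • nvec ω t) t := by
  have h : HasDerivAt (fun t => (![-(ω * Real.sin (ω * t)), ω * Real.cos (ω * t), 0] : Fin 3 → ℝ))
      (![-(ω ^ 2 * Real.cos (ω * t)), -(ω ^ 2 * Real.sin (ω * t)), 0]) t := by
    rw [hasDerivAt_pi]
    intro i
    fin_cases i <;> simp
    · have h0 := (((Real.hasDerivAt_sin (ω * t)).comp t
        ((hasDerivAt_id t).const_mul ω)).const_mul ω).neg
      convert h0 using 1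
      · funext x; simp
      · ring
    · have h0 := ((Real.hasDerivAt_cos (ω * t)).comp t
        ((hasDerivAt_id t).const_mul ω)).const_mul ω
      convert h0 using 1
      · rfl
      · funext x; simp
      · ring
    · exact hasDerivAt_const t 0
  have := (PiLp.continuousLinearEquiv 2 ℝ (fun _ : Fin 3 => ℝ)).symm.hasFDerivAt.comp_hasDerivAt t h
  refine this.congr_deriv ?_
  apply PiLp.ext
  intro i
  fin_cases i <;> simp [nvec]

lemma deriv2_smul_nvec (ω c : ℝ) (γ : ℝ → EuclideanSpace ℝ (Fin 3))
    (h : ∀ t, γ t = c • nvec ω t) (t : ℝ) :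
    deriv (deriv γ) t = (-(ω ^ 2) * c) • nvec ω t := by
  have hγ : γ = fun s => c • nvec ω s := funext h
  have h1 : deriv γ = fun s => c • nvec' ω s := by
    funext s
    rw [hγ]
    exact ((hasDerivAt_nvec ω s).const_smul c).deriv
  rw [h1, HasDerivAt.deriv (f := fun s => c • nvec' ω s) ((hasDerivAt_nvec' ω t).const_smul c), smul_smul]
  ring_nf

/-- Circular trajectories `γ₁(t) = (m₂/m)·r·n(t)`, `γ₂(t) = −(m₁/m)·r·n(t)` solve the
Yukawa-corrected two-body equations of motion of linearized area metric gravity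
(Coulomb potential `α/d` plus Yukawa potential `β·e^{−μd}/d`) if and only if
`ω² = (G·m/r³)·(α + β·(1 + μr)·e^{−μr})`. -/
theorem circular_orbit_yukawa_iff (G m₁ m₂ r : ℝ) (hG : 0 < G) (h1 : 0 < m₁)
    (h2 : 0 < m₂) (hr : 0 < r) (α β μ ω : ℝ) (hμ : 0 ≤ μ)
    (m : ℝ) (hm : m = m₁ + m₂)
    (γ₁ γ₂ : ℝ → EuclideanSpace ℝ (Fin 3))
    (hγ₁ : ∀ t, γ₁ t = ((m₂ / m) * r) • nvec ω t)
    (hγ₂ : ∀ t, γ₂ t = (-((m₁ / m) * r)) • nvec ω t) :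
    ((∀ t, deriv (deriv γ₁) t =
        (-(G * m₂ * (α + β * (1 + μ * ‖γ₁ t - γ₂ t‖) *
            Real.exp (-(μ * ‖γ₁ t - γ₂ t‖))) / ‖γ₁ t - γ₂ t‖ ^ 3)) • (γ₁ t - γ₂ t)) ∧
     (∀ t, deriv (deriv γ₂) t =
        (-(G * m₁ * (α + β * (1 + μ * ‖γ₂ t - γ₁ t‖) *
            Real.exp (-(μ * ‖γ₂ t - γ₁ t‖))) / ‖γ₂ t - γ₁ t‖ ^ 3)) • (γ₂ t - γ₁ t))) ↔
    ω ^ 2 = (G * m / r ^ 3) * (α + β * (1 + μ * r) * Real.exp (-(μ * r))) := by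
  have hm0 : (0:ℝ) < m := by rw [hm]; linarith
  have hm0' : m ≠ 0 := ne_of_gt hm0
  have hr0 : r ≠ 0 := ne_of_gt hr
  set K : ℝ := α + β * (1 + μ * r) * Real.exp (-(μ * r)) with hK
  have hd1 : ∀ t, γ₁ t - γ₂ t = r • nvec ω t := by
    intro t
    rw [hγ₁ t, hγ₂ t, ← sub_smul]
    congr 1
    field_simp
    rw [hm]; ring
  have hd2 : ∀ t, γ₂ t - γ₁ t = (-r) • nvec ω t := by
    intro t
    rw [← neg_sub, hd1 t, ← neg_smul]
  have hn1 : ∀ t, ‖γ₁ t - γ₂ t‖ = r := by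
    intro t
    rw [hd1 t, norm_smul, norm_nvec, Real.norm_eq_abs, abs_of_pos hr, mul_one]
  have hn2 : ∀ t, ‖γ₂ t - γ₁ t‖ = r := by
    intro t
    rw [hd2 t, norm_smul, norm_nvec, Real.norm_eq_abs, abs_neg, abs_of_pos hr, mul_one]
  constructor
  · rintro ⟨H, -⟩
    have h0 := H 0
    rw [deriv2_smul_nvec ω _ γ₁ hγ₁ 0, hn1 0, hd1 0, smul_smul] at h0
    have := smul_left_injective ℝ (nvec_ne_zero ω 0) h0
    field_simp at this ⊢
    rw [hm] at this ⊢; rw [hK]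
    have h4 : (m₂ * r) * (ω ^ 2 * r ^ 3) =
        (m₂ * r) * (G * (m₁ + m₂) * (α + β * (1 + μ * r) * Real.exp (-(μ * r)))) := by
      rw [mul_comm r μ] at this; linear_combination (-(m₂ * r)) * this
    rw [mul_comm (m₁ + m₂) G]; exact mul_left_cancel₀ (a := m₂ * r) (by positivity) h4
  · intro hω
    constructor
    · intro t
      rw [deriv2_smul_nvec ω _ γ₁ hγ₁ t, hn1 t, hd1 t, smul_smul]
      congr 1
      rw [hK] at hω
      field_simp at hω ⊢
      rw [hm] at hω ⊢
      linear_combination (-1 : ℝ) * hω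
    · intro t
      rw [deriv2_smul_nvec ω _ γ₂ hγ₂ t, hn2 t, hd2 t, smul_smul]
      congr 1
      rw [hK] at hω
      field_simp at hω ⊢
      rw [hm] at hω ⊢
      linear_combination hω
end

section
/- Let ν, ω₀ be real numbers with 0 < ω₀ < ν, and set κ = √(ν² − ω₀²). Define u : ℝ × EuclideanSpace ℝ (Fin 3) → ℝ by u(t,x) = exp(−κ‖x‖)·cos(ω₀ t)/‖x‖. Then for all t ∈ ℝ and all x ≠ 0, ∂ₜ²u(t,x) − Δₓu(t,x) + ν²·u(t,x) = 0: below the threshold ω₀ = ν, the massive wave equation admits only exponentially damped (non-radiating) spherical solutions oscillating in coordinate time. -/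
/-- The spatial Laplacian of `f : EuclideanSpace ℝ (Fin 3) → ℝ` at `x`: the sum over
`i` of the second partial derivatives of `f` in the `i`-th coordinate direction. -/
noncomputable def laplacian3 (f : EuclideanSpace ℝ (Fin 3) → ℝ)
    (x : EuclideanSpace ℝ (Fin 3)) : ℝ :=
  ∑ i : Fin 3,
    fderiv ℝ (fun y => fderiv ℝ f y (EuclideanSpace.single i 1)) x
      (EuclideanSpace.single i 1)

open Real

local notation "E3" => EuclideanSpace ℝ (Fin 3)

/-- Derivative of the norm on `EuclideanSpace ℝ (Fin 3)` away from `0`. -/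
lemma hasFDerivAt_norm3 {x : E3} (hx : x ≠ 0) :
    HasFDerivAt (fun y : E3 => ‖y‖) (‖x‖⁻¹ • innerSL ℝ x) x := by
  have hr : (0:ℝ) < ‖x‖ := norm_pos_iff.mpr hx
  have h1 : HasFDerivAt (fun y : E3 => ‖y‖ ^ 2) (2 • innerSL ℝ x) x :=
    (hasStrictFDerivAt_norm_sq x).hasFDerivAt
  have h2 : HasDerivAt Real.sqrt (1 / (2 * Real.sqrt (‖x‖ ^ 2))) (‖x‖ ^ 2) :=
    Real.hasDerivAt_sqrt (by positivity)
  have h3 := h2.comp_hasFDerivAt x h1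
  have he : (Real.sqrt ∘ fun y : E3 => ‖y‖ ^ 2) = fun y : E3 => ‖y‖ := by
    funext y; simp [Real.sqrt_sq (norm_nonneg y)]
  rw [he] at h3
  have heq : (1 / (2 * Real.sqrt (‖x‖ ^ 2))) • 2 • innerSL ℝ x
      = ‖x‖⁻¹ • innerSL ℝ (E := E3) x := by
    ext v
    simp only [ContinuousLinearMap.smul_apply, Real.sqrt_sq (norm_nonneg x), smul_eq_mul,
      nsmul_eq_mul, Nat.cast_ofNat]
    field_simp
  rwa [heq] at h3

/-- Chain rule for radial functions. -/
lemma hasFDerivAt_radial {x : E3} (hx : x ≠ 0) {φ : ℝ → ℝ} {d : ℝ}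
    (hφ : HasDerivAt φ d ‖x‖) :
    HasFDerivAt (fun y : E3 => φ ‖y‖) ((d * ‖x‖⁻¹) • innerSL ℝ x) x := by
  have h := hφ.comp_hasFDerivAt x (hasFDerivAt_norm3 hx)
  rw [smul_smul] at h
  exact h

lemma hasDerivAt_exp_neg (κ r : ℝ) :
    HasDerivAt (fun s : ℝ => Real.exp (-(κ * s))) (Real.exp (-(κ * r)) * -κ) r := by
  have h1 : HasDerivAt (fun s : ℝ => -(κ * s)) (-κ) r := by
    simpa [Pi.neg_def] using ((hasDerivAt_id r).const_mul κ).neg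
  simpa [Function.comp_def] using (Real.hasDerivAt_exp (-(κ * r))).comp r h1

lemma grad3 (κ A : ℝ) {y : E3} (hy : y ≠ 0) (i : Fin 3) :
    fderiv ℝ (fun z : E3 => A * Real.exp (-(κ * ‖z‖)) / ‖z‖) y (EuclideanSpace.single i 1)
      = -(A * Real.exp (-(κ * ‖y‖)) * (κ * ‖y‖ + 1)) / ‖y‖ ^ 3 * y i := by
  have hr : 0 < ‖y‖ := norm_pos_iff.mpr hy
  have hφ := ((hasDerivAt_exp_neg κ ‖y‖).const_mul A).div (hasDerivAt_id ‖y‖) hr.ne'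
  have hF : HasFDerivAt (fun z : E3 => A * Real.exp (-(κ * ‖z‖)) / ‖z‖) _ y :=
    hasFDerivAt_radial hy hφ
  rw [hF.fderiv]
  simp only [ContinuousLinearMap.smul_apply, innerSL_apply_apply, smul_eq_mul,
    EuclideanSpace.inner_single_right, RCLike.star_def, conj_trivial, one_mul, id_eq]
  field_simp
  ring

lemma lap3 (κ A : ℝ) {x : E3} (hx : x ≠ 0) :
    laplacian3 (fun y => A * Real.exp (-(κ * ‖y‖)) / ‖y‖) x
      = κ ^ 2 * (A * Real.exp (-(κ * ‖x‖)) / ‖x‖) := by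
  have hr : 0 < ‖x‖ := norm_pos_iff.mpr hx
  have hlin : HasDerivAt (fun s : ℝ => κ * s + 1) (κ * 1) ‖x‖ :=
    ((hasDerivAt_id ‖x‖).const_mul κ).add_const 1
  have hψ : HasDerivAt (fun s : ℝ => -(A * Real.exp (-(κ * s)) * (κ * s + 1)) / s ^ 3)
      (A * Real.exp (-(κ * ‖x‖)) * (κ ^ 2 * ‖x‖ ^ 2 + 3 * (κ * ‖x‖ + 1)) / ‖x‖ ^ 4) ‖x‖ := by
    have h := ((((hasDerivAt_exp_neg κ ‖x‖).const_mul A).mul hlin).neg).div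
      (hasDerivAt_pow 3 ‖x‖) (by positivity)
    refine h.congr_deriv ?_
    simp only [Pi.neg_apply, Pi.mul_apply, Nat.cast_ofNat]
    norm_num
    field_simp
    ring
  have hrad : HasFDerivAt (fun y : E3 => -(A * Real.exp (-(κ * ‖y‖)) * (κ * ‖y‖ + 1)) / ‖y‖ ^ 3)
      ((A * Real.exp (-(κ * ‖x‖)) * (κ ^ 2 * ‖x‖ ^ 2 + 3 * (κ * ‖x‖ + 1)) / ‖x‖ ^ 4 * ‖x‖⁻¹)
        • innerSL ℝ x) x := hasFDerivAt_radial hx hψ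
  have hEq : ∀ i : Fin 3,
      fderiv ℝ (fun y => fderiv ℝ (fun z : E3 => A * Real.exp (-(κ * ‖z‖)) / ‖z‖) y
          (EuclideanSpace.single i 1)) x (EuclideanSpace.single i 1)
      = -(A * Real.exp (-(κ * ‖x‖)) * (κ * ‖x‖ + 1)) / ‖x‖ ^ 3
        + (A * Real.exp (-(κ * ‖x‖)) * (κ ^ 2 * ‖x‖ ^ 2 + 3 * (κ * ‖x‖ + 1)) / ‖x‖ ^ 4 * ‖x‖⁻¹)
          * (x i * x i) := by
    intro i
    have hproj : HasFDerivAt (fun y : E3 => y i)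
        (EuclideanSpace.proj (𝕜 := ℝ) i : E3 →L[ℝ] ℝ) x :=
      (EuclideanSpace.proj (𝕜 := ℝ) i : E3 →L[ℝ] ℝ).hasFDerivAt
    have hmul : HasFDerivAt
        (fun y : E3 => -(A * Real.exp (-(κ * ‖y‖)) * (κ * ‖y‖ + 1)) / ‖y‖ ^ 3 * y i) _ x :=
      hrad.mul hproj
    have hev : (fun y => fderiv ℝ (fun z : E3 => A * Real.exp (-(κ * ‖z‖)) / ‖z‖) y
          (EuclideanSpace.single i 1))
        =ᶠ[nhds x] fun y : E3 => -(A * Real.exp (-(κ * ‖y‖)) * (κ * ‖y‖ + 1)) / ‖y‖ ^ 3 * y i := by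
      filter_upwards [isOpen_compl_singleton.mem_nhds (by simpa using hx)] with y hy
      exact grad3 κ A (by simpa using hy) i
    rw [hev.fderiv_eq, hmul.fderiv]
    simp only [ContinuousLinearMap.add_apply, ContinuousLinearMap.smul_apply, innerSL_apply_apply,
      smul_eq_mul, EuclideanSpace.inner_single_right, RCLike.star_def, conj_trivial, one_mul,
      PiLp.proj_apply, EuclideanSpace.single_apply, if_pos rfl]
    ring_nf
    simp
  have hsum : ∑ i : Fin 3, x i * x i = ‖x‖ ^ 2 := by
    rw [← real_inner_self_eq_norm_sq, PiLp.inner_apply]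
    simp [RCLike.inner_apply, conj_trivial, sq]
  unfold laplacian3
  simp only [hEq]
  rw [Finset.sum_add_distrib, ← Finset.mul_sum, hsum]
  simp only [Finset.sum_const, Finset.card_univ, Fintype.card_fin, nsmul_eq_mul]
  field_simp
  ring

/-- Below the threshold `ω₀ = ν`, the massive wave equation `□u + ν²u = 0` admits the
exponentially damped (non-radiating) spherical solution
`u(t,x) = e^{−κ‖x‖} cos(ω₀t)/‖x‖` with `κ = √(ν² − ω₀²)`, oscillating in coordinate
time. -/
theorem massive_wave_below_threshold (ν ω₀ : ℝ) (h0 : 0 < ω₀) (h1 : ω₀ < ν)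
    (κ : ℝ) (hκ : κ = Real.sqrt (ν ^ 2 - ω₀ ^ 2))
    (u : ℝ × EuclideanSpace ℝ (Fin 3) → ℝ)
    (hu : ∀ t x, u (t, x) = Real.exp (-(κ * ‖x‖)) * Real.cos (ω₀ * t) / ‖x‖) :
    ∀ (t : ℝ) (x : EuclideanSpace ℝ (Fin 3)), x ≠ 0 →
      deriv (deriv fun s => u (s, x)) t - laplacian3 (fun y => u (t, y)) x +
        ν ^ 2 * u (t, x) = 0 := by
  intro t x hx
  have hr : 0 < ‖x‖ := norm_pos_iff.mpr hx
  -- time part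
  have hcos : ∀ s : ℝ, HasDerivAt (fun s => Real.cos (ω₀ * s)) (-Real.sin (ω₀ * s) * ω₀) s := by
    intro s
    simpa [Function.comp_def] using (Real.hasDerivAt_cos (ω₀ * s)).comp s ((hasDerivAt_id s).const_mul ω₀)
  have hsin : ∀ s : ℝ, HasDerivAt (fun s => Real.sin (ω₀ * s)) (Real.cos (ω₀ * s) * ω₀) s := by
    intro s
    simpa [Function.comp_def] using (Real.hasDerivAt_sin (ω₀ * s)).comp s ((hasDerivAt_id s).const_mul ω₀)
  have hfun1 : (fun s => u (s, x))
      = fun s => Real.exp (-(κ * ‖x‖)) * Real.cos (ω₀ * s) / ‖x‖ := funext fun s => hu s x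
  have hd1 : deriv (fun s => u (s, x))
      = fun s => Real.exp (-(κ * ‖x‖)) * (-Real.sin (ω₀ * s) * ω₀) / ‖x‖ := by
    rw [hfun1]
    funext s
    exact (((hcos s).const_mul (Real.exp (-(κ * ‖x‖)))).div_const ‖x‖).deriv
  have hd2 : deriv (deriv fun s => u (s, x)) t
      = Real.exp (-(κ * ‖x‖)) * (-(Real.cos (ω₀ * t) * ω₀) * ω₀) / ‖x‖ := by
    rw [hd1]
    exact ((((hsin t).neg.mul_const ω₀).const_mul (Real.exp (-(κ * ‖x‖)))).div_const ‖x‖).deriv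
  -- space part
  have hfun2 : (fun y => u (t, y))
      = fun y : EuclideanSpace ℝ (Fin 3) =>
          Real.cos (ω₀ * t) * Real.exp (-(κ * ‖y‖)) / ‖y‖ := by
    funext y; rw [hu]; ring
  have hlap : laplacian3 (fun y => u (t, y)) x
      = κ ^ 2 * (Real.cos (ω₀ * t) * Real.exp (-(κ * ‖x‖)) / ‖x‖) := by
    rw [hfun2]; exact lap3 κ (Real.cos (ω₀ * t)) hx
  have hκ2 : κ ^ 2 = ν ^ 2 - ω₀ ^ 2 := by
    rw [hκ]; exact Real.sq_sqrt (by nlinarith)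
  rw [hd2, hlap, hu, hκ2]
  field_simp
  ring
end
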